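/- Let N be a quantum channel on d×d complex matrices and γ a positive-definite density matrix with N(γ) positive definite. Suppose N is covariant with respect to γ, i.e., for every real θ and every d×d matrix X: N(γ^{iθ} X γ^{−iθ}) = N(γ)^{iθ} N(X) N(γ)^{−iθ}. Then every rotated Petz recovery map coincides with the ordinary Petz recovery map: R_γ^θ = R_γ for all real θ. -/

import Mathlib

open Matrix
open scoped ComplexOrder

/-- ⟨v|A|w⟩ -/
noncomputable def braket {d : ℕ} (v : Fin d → ℂ) (A : Matrix (Fin d) (Fin d) ℂ)
    (w : Fin d → ℂ) : ℂ :=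
  dotProduct (star v) (A.mulVec w)

/-- |v⟩⟨w| -/
noncomputable def ketbra {d : ℕ} (v w : Fin d → ℂ) : Matrix (Fin d) (Fin d) ℂ :=
  Matrix.vecMulVec v (star w)

/-- A quantum channel in Kraus form: N(X) = ∑ m, K m * X * (K m)ᴴ. -/
noncomputable def krausMap {d : ℕ} {ι : Type} [Fintype ι] (K : ι → Matrix (Fin d) (Fin d) ℂ)
    (X : Matrix (Fin d) (Fin d) ℂ) : Matrix (Fin d) (Fin d) ℂ :=
  ∑ m, K m * X * (K m)ᴴ

/-- The adjoint map: N†(X) = ∑ m, (K m)ᴴ * X * K m. -/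
noncomputable def krausAdj {d : ℕ} {ι : Type} [Fintype ι] (K : ι → Matrix (Fin d) (Fin d) ℂ)
    (X : Matrix (Fin d) (Fin d) ℂ) : Matrix (Fin d) (Fin d) ℂ :=
  ∑ m, (K m)ᴴ * X * K m

/-- Functional calculus of a Hermitian matrix, via its spectral decomposition
(junk value `0` on non-Hermitian matrices). -/
noncomputable def mfun {n : Type} [Fintype n] [DecidableEq n] (f : ℝ → ℂ)
    (M : Matrix n n ℂ) : Matrix n n ℂ :=
  if h : M.IsHermitian then
    (h.eigenvectorUnitary : Matrix n n ℂ) *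
      Matrix.diagonal (fun i => f (h.eigenvalues i)) *
      star (h.eigenvectorUnitary : Matrix n n ℂ)
  else 0

/-- Complex matrix power A^z = exp (z log A) of a positive-definite matrix,
defined via its spectral decomposition. -/
noncomputable def mpow {n : Type} [Fintype n] [DecidableEq n]
    (M : Matrix n n ℂ) (z : ℂ) : Matrix n n ℂ :=
  mfun (fun r => (r : ℂ) ^ z) M

/-- The rotated Petz recovery map
R_γ^θ(X) = γ^{1/2+iθ} N†(N(γ)^{-1/2-iθ} X N(γ)^{-1/2+iθ}) γ^{1/2-iθ}. -/
noncomputable def rotPetz {d : ℕ} {ι : Type} [Fintype ι] (K : ι → Matrix (Fin d) (Fin d) ℂ)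
    (γ : Matrix (Fin d) (Fin d) ℂ) (θ : ℝ) (X : Matrix (Fin d) (Fin d) ℂ) :
    Matrix (Fin d) (Fin d) ℂ :=
  mpow γ (1/2 + θ * Complex.I) *
    krausAdj K (mpow (krausMap K γ) (-(1/2) - θ * Complex.I) * X *
      mpow (krausMap K γ) (-(1/2) + θ * Complex.I)) *
    mpow γ (1/2 - θ * Complex.I)


lemma mfun_mul' {n : Type} [Fintype n] [DecidableEq n] {M : Matrix n n ℂ}
    (hM : M.IsHermitian) (f g : ℝ → ℂ) :
    mfun f M * mfun g M = mfun (fun r => f r * g r) M := by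
  simp only [mfun, dif_pos hM]
  have hU : star (hM.eigenvectorUnitary : Matrix n n ℂ) * hM.eigenvectorUnitary = 1 :=
    Matrix.mem_unitaryGroup_iff'.mp hM.eigenvectorUnitary.2
  have hUU : ∀ A : Matrix n n ℂ,
      star (hM.eigenvectorUnitary : Matrix n n ℂ) * ((hM.eigenvectorUnitary : Matrix n n ℂ) * A) = A := by
    intro A; rw [← mul_assoc, hU, one_mul]
  rw [← Matrix.diagonal_mul_diagonal]
  simp only [mul_assoc, hUU]

lemma mfun_one' {n : Type} [Fintype n] [DecidableEq n] {M : Matrix n n ℂ}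
    (hM : M.IsHermitian) : mfun (fun _ => 1) M = 1 := by
  have hU : (hM.eigenvectorUnitary : Matrix n n ℂ) * star (hM.eigenvectorUnitary : Matrix n n ℂ) = 1 :=
    Matrix.mem_unitaryGroup_iff.mp hM.eigenvectorUnitary.2
  simp [mfun, dif_pos hM, Matrix.diagonal_one, hU]

lemma mfun_congr' {n : Type} [Fintype n] [DecidableEq n] {M : Matrix n n ℂ}
    (hM : M.PosDef) {f g : ℝ → ℂ} (h : ∀ r, 0 < r → f r = g r) :
    mfun f M = mfun g M := by
  simp only [mfun, dif_pos hM.1]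
  have : (fun i => f (hM.1.eigenvalues i)) = (fun i => g (hM.1.eigenvalues i)) :=
    funext fun i => h _ (hM.eigenvalues_pos i)
  rw [this]

lemma mpow_add' {n : Type} [Fintype n] [DecidableEq n] {M : Matrix n n ℂ}
    (hM : M.PosDef) (a b : ℂ) :
    mpow M (a + b) = mpow M a * mpow M b := by
  rw [mpow, mpow, mpow, mfun_mul' hM.1]
  exact mfun_congr' hM fun r hr =>
    Complex.cpow_add _ _ (Complex.ofReal_ne_zero.mpr hr.ne')

lemma mpow_zero' {n : Type} [Fintype n] [DecidableEq n] {M : Matrix n n ℂ}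
    (hM : M.IsHermitian) : mpow M 0 = 1 := by
  rw [mpow]
  simpa [Complex.cpow_zero] using mfun_one' hM

lemma trace_dual' {d : ℕ} {ι : Type} [Fintype ι] (K : ι → Matrix (Fin d) (Fin d) ℂ)
    (A B : Matrix (Fin d) (Fin d) ℂ) :
    Matrix.trace (krausMap K A * B) = Matrix.trace (A * krausAdj K B) := by
  simp only [krausMap, krausAdj, Finset.sum_mul, Matrix.mul_sum, Matrix.trace_sum]
  refine Finset.sum_congr rfl fun m _ => ?_
  have h1 : K m * A * (K m)ᴴ * B = K m * (A * ((K m)ᴴ * B)) := by simp only [mul_assoc]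
  rw [h1, Matrix.trace_mul_comm, mul_assoc]

lemma eq_of_forall_trace' {d : ℕ} {M M' : Matrix (Fin d) (Fin d) ℂ}
    (h : ∀ X, Matrix.trace (X * M) = Matrix.trace (X * M')) : M = M' := by
  ext i j
  have := h (Matrix.single j i 1)
  simpa [Matrix.trace, Matrix.mul_apply, Matrix.single, Matrix.diag, ite_and,
    Finset.sum_ite_eq, Finset.sum_ite_eq'] using this

/-- if N is covariant with respect to γ, then every rotated Petz recovery
map coincides with the ordinary Petz recovery map. -/
theorem covariant_channel_rotated_petz_eq_petz
    {d : ℕ} {ι : Type} [Fintype ι] (K : ι → Matrix (Fin d) (Fin d) ℂ)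
    (hK : ∑ m, (K m)ᴴ * K m = 1)
    (γ : Matrix (Fin d) (Fin d) ℂ) (hγ : γ.PosDef) (hγtr : γ.trace = 1)
    (hNγ : (krausMap K γ).PosDef)
    (hcov : ∀ θ : ℝ, ∀ X : Matrix (Fin d) (Fin d) ℂ,
      krausMap K (mpow γ (θ * Complex.I) * X * mpow γ (-(θ * Complex.I))) =
        mpow (krausMap K γ) (θ * Complex.I) * krausMap K X *
          mpow (krausMap K γ) (-(θ * Complex.I))) :
    ∀ θ : ℝ, ∀ X : Matrix (Fin d) (Fin d) ℂ, rotPetz K γ θ X = rotPetz K γ 0 X := by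
  intro θ X
  set Nγ := krausMap K γ with hNγdef
  set S := mpow γ (1/2) with hS
  set T := mpow Nγ (-(1/2)) with hT
  set Up := mpow γ (θ * Complex.I) with hUp
  set Um := mpow γ (-(θ * Complex.I)) with hUm
  set Vp := mpow Nγ (θ * Complex.I) with hVp
  set Vm := mpow Nγ (-(θ * Complex.I)) with hVm
  have hadj : ∀ B, Um * krausAdj K B * Up = krausAdj K (Vm * B * Vp) := by
    intro B
    apply eq_of_forall_trace'
    intro Y
    calc Matrix.trace (Y * (Um * krausAdj K B * Up))
        = Matrix.trace ((Up * Y * Um) * krausAdj K B) := by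
          have h1 : Y * (Um * krausAdj K B * Up) = (Y * Um) * krausAdj K B * Up := by
            simp only [mul_assoc]
          rw [h1, Matrix.trace_mul_cycle (Y * Um) (krausAdj K B) Up]
          simp only [mul_assoc]
      _ = Matrix.trace (krausMap K (Up * Y * Um) * B) := (trace_dual' K _ _).symm
      _ = Matrix.trace ((Vp * krausMap K Y * Vm) * B) := by rw [hcov θ Y]
      _ = Matrix.trace (krausMap K Y * (Vm * B * Vp)) := by
          have h2 : Vp * krausMap K Y * Vm * B = Vp * (krausMap K Y * (Vm * B)) := by
            simp only [mul_assoc]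
          rw [h2, Matrix.trace_mul_comm]
          simp only [mul_assoc]
      _ = Matrix.trace (Y * krausAdj K (Vm * B * Vp)) := trace_dual' K _ _
  have e1 : mpow γ (1/2 + θ * Complex.I) = S * Up := mpow_add' hγ _ _
  have e2 : mpow γ (1/2 - θ * Complex.I) = Um * S := by
    rw [show ((1:ℂ)/2 - θ * Complex.I) = -(θ * Complex.I) + 1/2 by ring, mpow_add' hγ]
  have e3 : mpow Nγ (-(1/2) - θ * Complex.I) = Vm * T := by
    rw [show (-(1/2 : ℂ) - θ * Complex.I) = -(θ * Complex.I) + -(1/2) by ring, mpow_add' hNγ]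
  have e4 : mpow Nγ (-(1/2) + θ * Complex.I) = T * Vp := mpow_add' hNγ _ _
  have c1 : ∀ Z : Matrix (Fin d) (Fin d) ℂ, Up * (Um * Z) = Z := by
    intro Z
    have : Up * Um = 1 := by
      rw [hUp, hUm, ← mpow_add' hγ, add_neg_cancel, mpow_zero' hγ.1]
    rw [← mul_assoc, this, one_mul]
  have hzero : rotPetz K γ 0 X = S * krausAdj K (T * X * T) * S := by
    simp only [rotPetz, Complex.ofReal_zero, zero_mul, add_zero, sub_zero, ← hNγdef, ← hS, ← hT]
  rw [hzero]
  rw [rotPetz, ← hNγdef, e1, e2, e3, e4]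
  have harg : Vm * T * X * (T * Vp) = Vm * (T * X * T) * Vp := by simp only [mul_assoc]
  rw [harg, ← hadj (T * X * T)]
  simp only [mul_assoc, c1]
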